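/- Let π* and π be probability distributions on a finite action set A, and let Q: A → [0, H] be a bounded function. Define π'(a) ∝ π(a)·exp(α·Q(a)) for α > 0. Then ⟨Q, π* − π⟩ ≤ (α H²)/2 + (1/α)·(KL(π* ‖ π) − KL(π* ‖ π')). -/

import Mathlib

open Finset

lemma exp_le_quad {x : ℝ} (hx : x ≤ 0) : Real.exp x ≤ 1 + x + x^2/2 := by
  have hanti : Antitone (fun y : ℝ => 1 + y + y^2/2 - Real.exp y) := by
    apply antitone_of_deriv_nonpos
    · fun_prop
    · intro y
      have hd : HasDerivAt (fun y : ℝ => 1 + y + y^2/2 - Real.exp y)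
          (1 + y - Real.exp y) y := by
        have h1 : HasDerivAt (fun y : ℝ => 1 + y + y^2/2) (1 + y) y := by
          have h := ((hasDerivAt_id y).const_add (1:ℝ)).add
            ((hasDerivAt_pow 2 y).div_const 2)
          exact h.congr_deriv (by norm_num)
        exact h1.sub (Real.hasDerivAt_exp y)
      rw [hd.deriv]
      nlinarith [Real.add_one_le_exp y]
  have := hanti hx
  simpa using this

/-- One-step descent lemma (mirror descent / exponentiated gradient step). -/
theorem stmt0 {A : Type*} [Fintype A] [Nonempty A]
    (H α : ℝ) (hα : 0 < α) (Q : A → ℝ)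
    (hQ0 : ∀ a, 0 ≤ Q a) (hQH : ∀ a, Q a ≤ H)
    (pstar p p' : A → ℝ)
    (hps0 : ∀ a, 0 ≤ pstar a) (hps1 : ∑ a, pstar a = 1)
    (hp0 : ∀ a, 0 < p a) (hp1 : ∑ a, p a = 1)
    (hp' : ∀ a, p' a = p a * Real.exp (α * Q a) / ∑ b, p b * Real.exp (α * Q b)) :
    ∑ a, Q a * (pstar a - p a) ≤
      α * H ^ 2 / 2 +
        (1 / α) * ((∑ a, pstar a * Real.log (pstar a / p a)) -
          (∑ a, pstar a * Real.log (pstar a / p' a))) := by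
  have hH : 0 ≤ H := le_trans (hQ0 (Classical.arbitrary A)) (hQH (Classical.arbitrary A))
  set S := ∑ b, p b * Real.exp (α * Q b) with hS
  have hSpos : 0 < S := Finset.sum_pos
    (fun a _ => mul_pos (hp0 a) (Real.exp_pos _)) Finset.univ_nonempty
  -- Step 1: log-partition bound
  have hT : ∀ a : A, p a * Real.exp (α * (Q a - H)) ≤
      p a * (1 + α * (Q a - H) + α^2 * H^2 / 2) := by
    intro a
    apply mul_le_mul_of_nonneg_left _ (hp0 a).le
    have h1 : α * (Q a - H) ≤ 0 := by nlinarith [hQH a]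
    have h2 := exp_le_quad h1
    have hkey : 0 ≤ α^2 * Q a * (2*H - Q a) :=
      mul_nonneg (mul_nonneg (sq_nonneg α) (hQ0 a)) (by linarith [hQH a, hQ0 a])
    nlinarith [hkey]
  have hsum : (∑ a, p a * Real.exp (α * (Q a - H))) ≤
      1 + α * ((∑ a, Q a * p a) - H) + α^2 * H^2 / 2 := by
    calc (∑ a, p a * Real.exp (α * (Q a - H)))
        ≤ ∑ a, p a * (1 + α * (Q a - H) + α^2 * H^2 / 2) :=
          Finset.sum_le_sum fun a _ => hT a
      _ = 1 + α * ((∑ a, Q a * p a) - H) + α^2 * H^2 / 2 := by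
          simp only [mul_add, mul_sub, Finset.sum_add_distrib, Finset.sum_sub_distrib,
            ← Finset.sum_mul, ← Finset.mul_sum, hp1]
          rw [show (∑ a, p a * (α * Q a)) = α * ∑ a, Q a * p a by
            rw [Finset.mul_sum]; exact Finset.sum_congr rfl fun a _ => by ring]
          ring
  have hSeq : S = Real.exp (α * H) * ∑ a, p a * Real.exp (α * (Q a - H)) := by
    rw [Finset.mul_sum]
    exact Finset.sum_congr rfl fun a _ => by
      rw [← mul_assoc, mul_comm (Real.exp (α*H)) (p a), mul_assoc, ← Real.exp_add]
      ring_nf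
  have hlogS : Real.log S ≤ α * (∑ a, Q a * p a) + α^2 * H^2 / 2 := by
    rw [Real.log_le_iff_le_exp hSpos, hSeq]
    calc Real.exp (α * H) * ∑ a, p a * Real.exp (α * (Q a - H))
        ≤ Real.exp (α * H) * Real.exp (α * ((∑ a, Q a * p a) - H) + α^2 * H^2 / 2) := by
          apply mul_le_mul_of_nonneg_left _ (Real.exp_pos _).le
          refine hsum.trans ?_
          have := Real.add_one_le_exp (α * ((∑ a, Q a * p a) - H) + α^2 * H^2 / 2)
          linarith
      _ = Real.exp (α * (∑ a, Q a * p a) + α^2 * H^2 / 2) := by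
          rw [← Real.exp_add]; ring_nf
  -- Step 2: KL difference
  have hKL : (∑ a, pstar a * Real.log (pstar a / p a)) -
      (∑ a, pstar a * Real.log (pstar a / p' a)) =
      α * (∑ a, Q a * pstar a) - Real.log S := by
    rw [← Finset.sum_sub_distrib]
    have : ∀ a : A, pstar a * Real.log (pstar a / p a) - pstar a * Real.log (pstar a / p' a)
        = pstar a * (α * Q a - Real.log S) := by
      intro a
      rcases eq_or_lt_of_le (hps0 a) with h | h
      · simp [← h]
      · have hp'pos : 0 < p' a := by
          rw [hp' a]
          exact div_pos (mul_pos (hp0 a) (Real.exp_pos _)) hSpos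
        rw [Real.log_div h.ne' (hp0 a).ne', Real.log_div h.ne' hp'pos.ne', hp' a,
          Real.log_div (mul_pos (hp0 a) (Real.exp_pos _)).ne' hSpos.ne',
          Real.log_mul (hp0 a).ne' (Real.exp_ne_zero _), Real.log_exp]
        ring
    rw [Finset.sum_congr rfl fun a _ => this a]
    simp only [mul_sub, Finset.sum_sub_distrib, ← Finset.sum_mul, ← Finset.mul_sum, hps1]
    rw [show (∑ a, pstar a * (α * Q a)) = α * ∑ a, Q a * pstar a by
      rw [Finset.mul_sum]; exact Finset.sum_congr rfl fun a _ => by ring]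
    ring
  -- Combine
  rw [hKL]
  have hexp : ∑ a, Q a * (pstar a - p a) = (∑ a, Q a * pstar a) - ∑ a, Q a * p a := by
    rw [← Finset.sum_sub_distrib]
    exact Finset.sum_congr rfl fun a _ => by ring
  rw [hexp]
  have : (1/α) * (α * (∑ a, Q a * pstar a) - Real.log S)
      = (∑ a, Q a * pstar a) - Real.log S / α := by
    field_simp
  rw [this]
  have h2 : Real.log S / α ≤ (∑ a, Q a * p a) + α * H^2/2 := by
    rw [div_le_iff₀ hα]
    nlinarith [hlogS]
  linarith
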